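/- arXiv:1604.06689 — 4 statements merged into one kernel-verified Lean document; each statement's English description precedes it below -/
import Mathlib

section
/- Let γ ∈ SL(2,ℂ) with ‖γ‖ > 1, where ‖γ‖ is the operator norm. Write the Cartan decomposition γ = k a k' with k, k' ∈ SU(2) and a diagonal with entries λ, λ⁻¹, |λ| ≥ 1; set s = k'⁻¹(0) and n = k(∞) in ℂP¹. Then for α ∈ (0,1): γ maps the complement of the open chordal disc D(s,α) onto the closed chordal disc of center n and radius α if and only if ‖γ‖ = √(1-α²)/α. -/
open Complex Set

/-- Chordal distance on ℂP¹ = ℂ ∪ {∞}, modeled as `Option ℂ` (`none` = ∞). -/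
noncomputable def chordal : Option ℂ → Option ℂ → ℝ
  | some z₁, some z₂ =>
      ‖z₁ - z₂‖ /
        (Real.sqrt (1 + ‖z₁‖ ^ 2) * Real.sqrt (1 + ‖z₂‖ ^ 2))
  | some z, none => 1 / Real.sqrt (1 + ‖z‖ ^ 2)
  | none, some z => 1 / Real.sqrt (1 + ‖z‖ ^ 2)
  | none, none => 0

/-- Möbius action of a 2×2 complex matrix on ℂP¹. -/
noncomputable def mobius (g : Matrix (Fin 2) (Fin 2) ℂ) : Option ℂ → Option ℂ
  | some z => if g 1 0 * z + g 1 1 = 0 then none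
              else some ((g 0 0 * z + g 0 1) / (g 1 0 * z + g 1 1))
  | none => if g 1 0 = 0 then none else some (g 0 0 / g 1 0)

/-- Operator norm of a 2×2 complex matrix acting on ℂ² with Euclidean norm. -/
noncomputable def opNorm (g : Matrix (Fin 2) (Fin 2) ℂ) : ℝ :=
  ‖LinearMap.toContinuousLinearMap (Matrix.toEuclideanLin g)‖

/-- Membership in SU(2). -/
def SU2 (k : Matrix (Fin 2) (Fin 2) ℂ) : Prop := k.det = 1 ∧ k.conjTranspose * k = 1

/-- Open chordal disc. -/
def Dopen (z : Option ℂ) (α : ℝ) : Set (Option ℂ) := {w | chordal w z < α}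

/-- Closed chordal disc. -/
def Dclosed (z : Option ℂ) (α : ℝ) : Set (Option ℂ) := {w | chordal w z ≤ α}
abbrev SL2 := Matrix.SpecialLinearGroup (Fin 2) ℂ

open scoped Matrix.Norms.L2Operator

/-! ### Auxiliary lemmas -/

lemma mobius_mul (g h : Matrix (Fin 2) (Fin 2) ℂ) (hh : h.det ≠ 0) (x : Option ℂ) :
    mobius (g * h) x = mobius g (mobius h x) := by
  rw [Matrix.det_fin_two] at hh
  have hmul : ∀ i j, (g * h) i j = g i 0 * h 0 j + g i 1 * h 1 j := by
    intro i j; simp [Matrix.mul_apply, Fin.sum_univ_two]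
  cases x with
  | none =>
    by_cases h10 : h 1 0 = 0
    · have h00 : h 0 0 ≠ 0 := fun h' => hh (by rw [h', h10]; ring)
      simp only [mobius, h10, if_pos rfl, hmul, mul_zero, add_zero]
      by_cases g10 : g 1 0 = 0 <;>
        simp [g10, h00, mul_ne_zero, mul_div_mul_right]
    · simp only [mobius, h10, if_neg h10, hmul]
      by_cases hden : g 1 0 * (h 0 0 / h 1 0) + g 1 1 = 0
      · have hz : g 1 0 * h 0 0 + g 1 1 * h 1 0 = 0 := by
          field_simp at hden; linear_combination hden
        simp [hden, hz]
      · have hne : g 1 0 * h 0 0 + g 1 1 * h 1 0 ≠ 0 := by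
          intro h'; apply hden; field_simp; linear_combination h'
        simp only [hne, hden, if_false, if_neg hne, if_neg hden]
        congr 1
        rw [div_eq_div_iff hne hden]
        field_simp
        try ring
  | some z =>
    by_cases hw : h 1 0 * z + h 1 1 = 0
    · have hnum : h 0 0 * z + h 0 1 ≠ 0 := fun h' =>
        hh (by linear_combination h 0 0 * hw - h 1 0 * h')
      simp only [mobius, hw, if_pos rfl, hmul]
      have e1 : (g 1 0 * h 0 0 + g 1 1 * h 1 0) * z + (g 1 0 * h 0 1 + g 1 1 * h 1 1)
          = g 1 0 * (h 0 0 * z + h 0 1) := by linear_combination g 1 1 * hw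
      have e2 : (g 0 0 * h 0 0 + g 0 1 * h 1 0) * z + (g 0 0 * h 0 1 + g 0 1 * h 1 1)
          = g 0 0 * (h 0 0 * z + h 0 1) := by linear_combination g 0 1 * hw
      rw [e1, e2]
      by_cases g10 : g 1 0 = 0 <;>
        simp [g10, hnum, mul_ne_zero, mul_div_mul_right]
    · simp only [mobius, hw, if_neg hw, hmul]
      by_cases hden : g 1 0 * ((h 0 0 * z + h 0 1) / (h 1 0 * z + h 1 1)) + g 1 1 = 0
      · have hz : (g 1 0 * h 0 0 + g 1 1 * h 1 0) * z + (g 1 0 * h 0 1 + g 1 1 * h 1 1) = 0 := by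
          have e : (g 1 0 * ((h 0 0 * z + h 0 1) / (h 1 0 * z + h 1 1)) + g 1 1) * (h 1 0 * z + h 1 1)
              = (g 1 0 * h 0 0 + g 1 1 * h 1 0) * z + (g 1 0 * h 0 1 + g 1 1 * h 1 1) := by
            rw [add_mul, mul_assoc (g 1 0), div_mul_cancel₀ _ hw]; ring
          rw [← e, hden, zero_mul]
        simp [hden, hz]
      · have hne : (g 1 0 * h 0 0 + g 1 1 * h 1 0) * z + (g 1 0 * h 0 1 + g 1 1 * h 1 1) ≠ 0 := by
          intro h'; apply hden
          have e : (g 1 0 * ((h 0 0 * z + h 0 1) / (h 1 0 * z + h 1 1)) + g 1 1) * (h 1 0 * z + h 1 1) = 0 := by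
            rw [add_mul, mul_assoc (g 1 0), div_mul_cancel₀ _ hw, ← h']; ring
          exact (mul_eq_zero.mp e).resolve_right hw
        simp only [hne, hden, if_false, if_neg hne, if_neg hden]
        congr 1
        rw [div_eq_div_iff hne hden]
        field_simp
        try ring

lemma mobius_one (x : Option ℂ) : mobius 1 x = x := by
  cases x <;> simp [mobius, Matrix.one_apply]

lemma su2_struct {k : Matrix (Fin 2) (Fin 2) ℂ} (hk : SU2 k) :
    k 1 1 = (starRingEnd ℂ) (k 0 0) ∧ k 1 0 = -(starRingEnd ℂ) (k 0 1) ∧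
      k 0 0 * (starRingEnd ℂ) (k 0 0) + k 0 1 * (starRingEnd ℂ) (k 0 1) = 1 := by
  obtain ⟨hdet, hmul⟩ := hk
  have hinv : k⁻¹ = k.conjTranspose := Matrix.inv_eq_left_inv hmul
  have hadj : k⁻¹ = k.adjugate := by
    rw [Matrix.inv_def, hdet]; simp
  rw [hinv] at hadj
  have h00 := congrFun (congrFun hadj 0) 0
  have h01 := congrFun (congrFun hadj 0) 1
  have h10 := congrFun (congrFun hadj 1) 0
  rw [Matrix.adjugate_fin_two] at h00 h01 h10
  simp [Matrix.conjTranspose_apply] at h00 h01 h10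
  refine ⟨h00.symm, ?_, ?_⟩
  · rw [h10]; ring
  · have hd := hdet
    rw [Matrix.det_fin_two] at hd
    rw [← h00] at hd
    rw [h10]
    linear_combination hd

lemma R_pos (z : ℂ) : 0 < Real.sqrt (1 + ‖z‖ ^ 2) := by
  apply Real.sqrt_pos.mpr; positivity

lemma chordal_comm (x y : Option ℂ) : chordal x y = chordal y x := by
  cases x <;> cases y <;> simp [chordal, norm_sub_rev, mul_comm]

lemma chordal_self (x : Option ℂ) : chordal x x = 0 := by
  cases x <;> simp [chordal]

section isom
variable {a b : ℂ} (hC : a * (starRingEnd ℂ) a + b * (starRingEnd ℂ) b = 1)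
include hC

lemma S1 (z : ℂ) :
    ‖a*z+b‖ ^ 2 + ‖-(starRingEnd ℂ) b * z + (starRingEnd ℂ) a‖ ^ 2
      = 1 + ‖z‖ ^ 2 := by
  have key : (a*z+b) * (starRingEnd ℂ) (a*z+b)
      + (-(starRingEnd ℂ) b * z + (starRingEnd ℂ) a) *
        (starRingEnd ℂ) (-(starRingEnd ℂ) b * z + (starRingEnd ℂ) a)
      = 1 + z * (starRingEnd ℂ) z := by
    simp only [map_add, map_mul, map_neg, Complex.conj_conj]
    linear_combination (1 + z * (starRingEnd ℂ) z) * hC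
  rw [Complex.mul_conj, Complex.mul_conj, Complex.mul_conj] at key
  rw [Complex.sq_norm, Complex.sq_norm, Complex.sq_norm]
  exact_mod_cast key

lemma F {z : ℂ} (hd : -(starRingEnd ℂ) b * z + (starRingEnd ℂ) a ≠ 0) :
    Real.sqrt (1 + ‖(a*z+b)/(-(starRingEnd ℂ) b * z + (starRingEnd ℂ) a)‖ ^ 2)
      = Real.sqrt (1 + ‖z‖ ^ 2)
          / ‖-(starRingEnd ℂ) b * z + (starRingEnd ℂ) a‖ := by
  have habs : ‖-(starRingEnd ℂ) b * z + (starRingEnd ℂ) a‖ ≠ 0 := by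
    simpa using hd
  have e : 1 + ‖(a*z+b)/(-(starRingEnd ℂ) b * z + (starRingEnd ℂ) a)‖ ^ 2
      = (1 + ‖z‖ ^ 2)
        / ‖-(starRingEnd ℂ) b * z + (starRingEnd ℂ) a‖ ^ 2 := by
    rw [norm_div, div_pow, ← S1 hC z]
    rw [neg_mul] at habs
    have h0 : ‖-(starRingEnd ℂ) b * z + (starRingEnd ℂ) a‖ ^ 2 ≠ 0 := pow_ne_zero 2 (by simpa using hd)
    rw [add_div, div_self h0]; ring
  rw [e, Real.sqrt_div (by positivity), Real.sqrt_sq (norm_nonneg _)]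

lemma hRreal : ‖a‖ ^ 2 + ‖b‖ ^ 2 = 1 := by
  have := hC
  rw [Complex.mul_conj, Complex.mul_conj] at this
  rw [Complex.sq_norm, Complex.sq_norm]
  exact_mod_cast this

lemma bne_of_D_eq_zero {z : ℂ} (hd : -(starRingEnd ℂ) b * z + (starRingEnd ℂ) a = 0) :
    b ≠ 0 := by
  intro hb0
  rw [hb0] at hd hC
  simp at hd
  rw [hd] at hC
  simp at hC

lemma absN_of_D_eq_zero {z : ℂ} (hd : -(starRingEnd ℂ) b * z + (starRingEnd ℂ) a = 0) :
    ‖a*z+b‖ = Real.sqrt (1 + ‖z‖ ^ 2) := by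
  have h2 : ‖a*z+b‖ ^ 2 = 1 + ‖z‖ ^ 2 := by
    have := S1 hC z
    rw [hd] at this
    simpa using this
  rw [← Real.sqrt_sq (norm_nonneg (a*z+b)), h2]

lemma isom_zero_ne {z₁ z₂ : ℂ} (hd₁ : -(starRingEnd ℂ) b * z₁ + (starRingEnd ℂ) a = 0)
    (hd₂ : -(starRingEnd ℂ) b * z₂ + (starRingEnd ℂ) a ≠ 0) :
    chordal none (some ((a*z₂+b)/(-(starRingEnd ℂ) b * z₂ + (starRingEnd ℂ) a)))
      = chordal (some z₁) (some z₂) := by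
  simp only [chordal]
  rw [F hC hd₂]
  have hcross : z₁ - z₂ = (a*z₁+b) * (-(starRingEnd ℂ) b * z₂ + (starRingEnd ℂ) a) := by
    linear_combination -(z₁ - z₂) * hC - (a * z₂ + b) * hd₁
  rw [hcross, norm_mul, absN_of_D_eq_zero hC hd₁]
  have h1 := R_pos z₁
  have h2 := R_pos z₂
  have h3 : ‖-(starRingEnd ℂ) b * z₂ + (starRingEnd ℂ) a‖ ≠ 0 := by simpa using hd₂
  field_simp

lemma isom_ne_ne {z₁ z₂ : ℂ} (hd₁ : -(starRingEnd ℂ) b * z₁ + (starRingEnd ℂ) a ≠ 0)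
    (hd₂ : -(starRingEnd ℂ) b * z₂ + (starRingEnd ℂ) a ≠ 0) :
    chordal (some ((a*z₁+b)/(-(starRingEnd ℂ) b * z₁ + (starRingEnd ℂ) a)))
        (some ((a*z₂+b)/(-(starRingEnd ℂ) b * z₂ + (starRingEnd ℂ) a)))
      = chordal (some z₁) (some z₂) := by
  simp only [chordal]
  rw [F hC hd₁, F hC hd₂]
  have hcross : (a*z₁+b)/(-(starRingEnd ℂ) b * z₁ + (starRingEnd ℂ) a)
      - (a*z₂+b)/(-(starRingEnd ℂ) b * z₂ + (starRingEnd ℂ) a)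
      = (z₁ - z₂) / ((-(starRingEnd ℂ) b * z₁ + (starRingEnd ℂ) a)
          * (-(starRingEnd ℂ) b * z₂ + (starRingEnd ℂ) a)) := by
    rw [div_sub_div _ _ hd₁ hd₂]
    congr 1
    linear_combination (z₁ - z₂) * hC
  rw [hcross, norm_div, norm_mul]
  have h1 := R_pos z₁
  have h2 := R_pos z₂
  have h3 : ‖-(starRingEnd ℂ) b * z₁ + (starRingEnd ℂ) a‖ ≠ 0 := by simpa using hd₁
  have h4 : ‖-(starRingEnd ℂ) b * z₂ + (starRingEnd ℂ) a‖ ≠ 0 := by simpa using hd₂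
  set A₁ := ‖-(starRingEnd ℂ) b * z₁ + (starRingEnd ℂ) a‖
  set A₂ := ‖-(starRingEnd ℂ) b * z₂ + (starRingEnd ℂ) a‖
  set R₁ := Real.sqrt (1 + ‖z₁‖ ^ 2)
  set R₂ := Real.sqrt (1 + ‖z₂‖ ^ 2)
  field_simp
  try ring

lemma isom_inf_b0 (hb : b = 0) (z : ℂ) :
    chordal (some ((a*z+b)/(-(starRingEnd ℂ) b * z + (starRingEnd ℂ) a))) none
      = chordal (some z) none := by
  have hane : (starRingEnd ℂ) a ≠ 0 := by
    intro h0
    rw [hb, show a = 0 from by simpa using congrArg (starRingEnd ℂ) h0] at hC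
    simp at hC
  have hd : -(starRingEnd ℂ) b * z + (starRingEnd ℂ) a ≠ 0 := by
    rw [hb]; simpa using hane
  simp only [chordal]
  rw [F hC hd]
  have hA : ‖-(starRingEnd ℂ) b * z + (starRingEnd ℂ) a‖ = 1 := by
    rw [hb]
    simp only [map_zero, neg_zero, zero_mul, zero_add]
    have := hRreal hC
    rw [hb] at this
    simp only [map_zero, norm_zero, ne_eq, OfNat.ofNat_ne_zero, not_false_eq_true, zero_pow, add_zero] at this
    rw [Complex.norm_conj]
    nlinarith [norm_nonneg a]
  rw [hA, div_one]

lemma Finf (hb : b ≠ 0) :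
    Real.sqrt (1 + ‖a/(-(starRingEnd ℂ) b)‖ ^ 2) = 1 / ‖b‖ := by
  have hbabs : ‖b‖ ≠ 0 := by simpa using hb
  have e : 1 + ‖a/(-(starRingEnd ℂ) b)‖ ^ 2 = (1 / ‖b‖) ^ 2 := by
    rw [norm_div, div_pow, norm_neg, Complex.norm_conj]
    have := hRreal hC
    field_simp
    linarith
  rw [e, Real.sqrt_sq (by positivity)]

lemma isom_infpt_D0 {z : ℂ} (hd : -(starRingEnd ℂ) b * z + (starRingEnd ℂ) a = 0) :
    chordal none (some (a/(-(starRingEnd ℂ) b))) = chordal (some z) none := by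
  have hb : b ≠ 0 := bne_of_D_eq_zero hC hd
  simp only [chordal]
  rw [Finf hC hb]
  have habz : ‖a‖ = ‖b‖ * ‖z‖ := by
    have h1 : (starRingEnd ℂ) a = (starRingEnd ℂ) b * z := by linear_combination hd
    have := congrArg (fun x : ℂ => ‖x‖) h1
    simpa [Complex.norm_conj] using this
  have hbabs : (0:ℝ) < ‖b‖ := by
    simpa [norm_pos_iff] using hb
  have hRz : Real.sqrt (1 + ‖z‖ ^ 2) = 1 / ‖b‖ := by
    have e : 1 + ‖z‖ ^ 2 = (1 / ‖b‖) ^ 2 := by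
      have := hRreal hC
      rw [habz] at this
      field_simp
      nlinarith [this]
    rw [e, Real.sqrt_sq (by positivity)]
  rw [hRz]

lemma isom_inf_Dne {z : ℂ} (hb : b ≠ 0)
    (hd : -(starRingEnd ℂ) b * z + (starRingEnd ℂ) a ≠ 0) :
    chordal (some ((a*z+b)/(-(starRingEnd ℂ) b * z + (starRingEnd ℂ) a)))
        (some (a/(-(starRingEnd ℂ) b)))
      = chordal (some z) none := by
  simp only [chordal]
  rw [F hC hd, Finf hC hb]
  have hbne : -(starRingEnd ℂ) b ≠ 0 := by simpa using hb
  have hdiff : (a*z+b)/(-(starRingEnd ℂ) b * z + (starRingEnd ℂ) a) - a/(-(starRingEnd ℂ) b)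
      = (-1) / ((-(starRingEnd ℂ) b * z + (starRingEnd ℂ) a) * (-(starRingEnd ℂ) b)) := by
    rw [div_sub_div _ _ hd hbne]
    congr 1
    linear_combination -hC
  rw [hdiff, norm_div, norm_mul, norm_neg, norm_neg,
    Complex.norm_conj, norm_one]
  have h1 := R_pos z
  have h3 : ‖-(starRingEnd ℂ) b * z + (starRingEnd ℂ) a‖ ≠ 0 := by simpa using hd
  have hbabs : ‖b‖ ≠ 0 := by simpa using hb
  set A := ‖-(starRingEnd ℂ) b * z + (starRingEnd ℂ) a‖
  set R := Real.sqrt (1 + ‖z‖ ^ 2)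
  field_simp

end isom

lemma su2_isom {k : Matrix (Fin 2) (Fin 2) ℂ} (hk : SU2 k) (x y : Option ℂ) :
    chordal (mobius k x) (mobius k y) = chordal x y := by
  obtain ⟨e11, e10, hC⟩ := su2_struct hk
  set a := k 0 0 with ha
  set b := k 0 1 with hb
  have hss : ∀ z₁ z₂ : ℂ,
      chordal (mobius k (some z₁)) (mobius k (some z₂)) = chordal (some z₁) (some z₂) := by
    intro z₁ z₂
    simp only [mobius, e10, e11]
    by_cases hd₁ : -(starRingEnd ℂ) b * z₁ + (starRingEnd ℂ) a = 0
    · by_cases hd₂ : -(starRingEnd ℂ) b * z₂ + (starRingEnd ℂ) a = 0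
      · have hbne : b ≠ 0 := bne_of_D_eq_zero hC hd₁
        have hcb : (starRingEnd ℂ) b ≠ 0 := by simpa using hbne
        have hz : z₁ = z₂ := mul_left_cancel₀ hcb (by linear_combination hd₂ - hd₁)
        rw [hz]
        simp [chordal_self]
      · simp only [if_pos hd₁, if_neg hd₂]
        exact isom_zero_ne hC hd₁ hd₂
    · by_cases hd₂ : -(starRingEnd ℂ) b * z₂ + (starRingEnd ℂ) a = 0
      · simp only [if_neg hd₁, if_pos hd₂]
        rw [chordal_comm, chordal_comm (some z₁) (some z₂)]
        exact isom_zero_ne hC hd₂ hd₁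
      · simp only [if_neg hd₁, if_neg hd₂]
        exact isom_ne_ne hC hd₁ hd₂
  have hsn : ∀ z : ℂ, chordal (mobius k (some z)) (mobius k none) = chordal (some z) none := by
    intro z
    simp only [mobius, e10, e11]
    by_cases hb0 : b = 0
    · have hane : (starRingEnd ℂ) a ≠ 0 := by
        intro h0
        rw [hb0, show a = 0 from by simpa using congrArg (starRingEnd ℂ) h0] at hC
        simp at hC
      have hcb : -(starRingEnd ℂ) b = 0 := by simp [hb0]
      have hd : -(starRingEnd ℂ) b * z + (starRingEnd ℂ) a ≠ 0 := by
        rw [hb0]; simpa using hane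
      simp only [if_neg hd, if_pos hcb]
      exact isom_inf_b0 hC hb0 z
    · have hcb : -(starRingEnd ℂ) b ≠ 0 := by simpa using hb0
      simp only [if_neg hcb]
      by_cases hd : -(starRingEnd ℂ) b * z + (starRingEnd ℂ) a = 0
      · simp only [if_pos hd]
        exact isom_infpt_D0 hC hd
      · simp only [if_neg hd]
        exact isom_inf_Dne hC hb0 hd
  match x, y with
  | some z₁, some z₂ => exact hss z₁ z₂
  | some z, none => exact hsn z
  | none, some z => rw [chordal_comm, hsn z, chordal_comm]
  | none, none => rw [chordal_self, chordal_self]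

/-! ### Inverses and bijectivity -/

lemma su2_det_ne {k : Matrix (Fin 2) (Fin 2) ℂ} (hk : SU2 k) : k.det ≠ 0 := by
  rw [hk.1]; exact one_ne_zero

lemma su2_mobius_inv_right {k : Matrix (Fin 2) (Fin 2) ℂ} (hk : SU2 k) (x : Option ℂ) :
    mobius k (mobius k⁻¹ x) = x := by
  have hu : IsUnit k.det := by rw [hk.1]; exact isUnit_one
  have hdi : (k⁻¹).det ≠ 0 := by
    rw [Matrix.det_nonsing_inv, hk.1]; simp
  rw [← mobius_mul k k⁻¹ hdi, Matrix.mul_nonsing_inv k hu, mobius_one]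

lemma su2_mobius_inv_left {k : Matrix (Fin 2) (Fin 2) ℂ} (hk : SU2 k) (x : Option ℂ) :
    mobius k⁻¹ (mobius k x) = x := by
  have hu : IsUnit k.det := by rw [hk.1]; exact isUnit_one
  rw [← mobius_mul k⁻¹ k (su2_det_ne hk), Matrix.nonsing_inv_mul k hu, mobius_one]

lemma su2_surj {k : Matrix (Fin 2) (Fin 2) ℂ} (hk : SU2 k) :
    Function.Surjective (mobius k) :=
  fun y => ⟨mobius k⁻¹ y, su2_mobius_inv_right hk y⟩

lemma su2_inj {k : Matrix (Fin 2) (Fin 2) ℂ} (hk : SU2 k) :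
    Function.Injective (mobius k) :=
  Function.LeftInverse.injective (su2_mobius_inv_left hk)

/-! ### Operator norm -/

lemma opNorm_eq_norm (g : Matrix (Fin 2) (Fin 2) ℂ) : opNorm g = ‖g‖ := rfl

lemma su2_mem_unitary {k : Matrix (Fin 2) (Fin 2) ℂ} (hk : SU2 k) :
    k ∈ unitary (Matrix (Fin 2) (Fin 2) ℂ) := by
  rw [Unitary.mem_iff]
  exact ⟨hk.2, mul_eq_one_comm.mp hk.2⟩

lemma norm_diag {lam : ℂ} (hlam : 1 ≤ ‖lam‖) :
    ‖(Matrix.diagonal ![lam, lam⁻¹] : Matrix (Fin 2) (Fin 2) ℂ)‖ = ‖lam‖ := by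
  have hlam0 : lam ≠ 0 := by
    intro h; rw [h] at hlam; simp at hlam; linarith
  have hinvle : ‖lam⁻¹‖ ≤ ‖lam‖ := by
    rw [norm_inv]
    calc (‖lam‖)⁻¹ ≤ 1 := by
          rw [inv_le_one_iff₀]; right; exact hlam
      _ ≤ ‖lam‖ := hlam
  apply le_antisymm
  · rw [Matrix.l2_opNorm_def]
    apply ContinuousLinearMap.opNorm_le_bound _ (by positivity)
    intro x
    rw [LinearEquiv.trans_apply]
    have hx : ∀ (y : EuclideanSpace ℂ (Fin 2)),
        ‖y‖ = Real.sqrt (‖y 0‖ ^ 2 + ‖y 1‖ ^ 2) := by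
      intro y
      rw [EuclideanSpace.norm_eq, Fin.sum_univ_two]
    rw [LinearMap.coe_toContinuousLinearMap']
    rw [hx, hx x]
    have happ : ∀ i, (Matrix.toEuclideanLin (Matrix.diagonal ![lam, lam⁻¹]) x) i
        = ![lam, lam⁻¹] i * x i := by
      intro i
      rw [Matrix.toEuclideanLin_apply]
      simp [Matrix.mulVec_diagonal]
    rw [happ 0, happ 1]
    rw [show ‖lam‖ * Real.sqrt (‖x 0‖ ^ 2 + ‖x 1‖ ^ 2)
        = Real.sqrt (‖lam‖ ^ 2 * (‖x 0‖ ^ 2 + ‖x 1‖ ^ 2)) from by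
      rw [Real.sqrt_mul (by positivity), Real.sqrt_sq (by positivity)]]
    apply Real.sqrt_le_sqrt
    simp only [norm_mul]
    have h1 : ‖![lam, lam⁻¹] 0‖ = ‖lam‖ := by norm_num
    have h2 : ‖![lam, lam⁻¹] 1‖ = ‖lam⁻¹‖ := by norm_num
    rw [h1, h2]
    have hx1 : (0:ℝ) ≤ ‖x 1‖ ^ 2 := by positivity
    nlinarith [mul_pos (lt_of_lt_of_le zero_lt_one hlam) (lt_of_lt_of_le zero_lt_one hlam),
      sq_nonneg (‖x 0‖), sq_nonneg (‖x 1‖),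
      mul_le_mul_of_nonneg_right (mul_le_mul hinvle hinvle (by positivity) (by positivity)) hx1]
  · rw [Matrix.l2_opNorm_def]
    set T := ((Matrix.toEuclideanLin (𝕜 := ℂ) (m := Fin 2) (n := Fin 2)).trans
      LinearMap.toContinuousLinearMap) (Matrix.diagonal ![lam, lam⁻¹]) with hT
    have hb := T.le_opNorm ((WithLp.equiv 2 (Fin 2 → ℂ)).symm ![1, 0])
    have hnx : ‖(WithLp.equiv 2 (Fin 2 → ℂ)).symm ![1, 0]‖ = 1 := by
      rw [EuclideanSpace.norm_eq, Fin.sum_univ_two]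
      simp
    have hTx : T ((WithLp.equiv 2 (Fin 2 → ℂ)).symm ![1, 0])
        = (WithLp.equiv 2 (Fin 2 → ℂ)).symm ![lam, 0] := by
      rw [hT, LinearEquiv.trans_apply, LinearMap.coe_toContinuousLinearMap',
        WithLp.equiv_symm_apply, Matrix.toEuclideanLin_apply_piLp_toLp]
      congr 1
      ext i
      fin_cases i <;> simp [Matrix.mulVec_diagonal]
    rw [hTx, hnx, mul_one] at hb
    calc ‖lam‖ = ‖(WithLp.equiv 2 (Fin 2 → ℂ)).symm ![lam, 0]‖ := by
          rw [EuclideanSpace.norm_eq, Fin.sum_univ_two]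
          simp
      _ ≤ ‖T‖ := hb

lemma opNorm_dec {γ k k' : Matrix (Fin 2) (Fin 2) ℂ} {lam : ℂ}
    (hk : SU2 k) (hk' : SU2 k') (hlam : 1 ≤ ‖lam‖)
    (hdec : γ = k * Matrix.diagonal ![lam, lam⁻¹] * k') :
    opNorm γ = ‖lam‖ := by
  rw [opNorm_eq_norm, hdec, CStarRing.norm_mul_mem_unitary _ (su2_mem_unitary hk'),
    CStarRing.norm_mem_unitary_mul _ (su2_mem_unitary hk), norm_diag hlam]

/-! ### Real inequalities -/

lemma L1 {α u : ℝ} (hα0 : 0 < α) (hα1 : α < 1) (hu : 0 ≤ u) :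
    α ≤ u / Real.sqrt (1 + u ^ 2) ↔ α / Real.sqrt (1 - α ^ 2) ≤ u := by
  have h1 : (0:ℝ) < Real.sqrt (1 + u ^ 2) := Real.sqrt_pos.mpr (by positivity)
  have ha2 : (0:ℝ) < 1 - α ^ 2 := by nlinarith
  have h2 : (0:ℝ) < Real.sqrt (1 - α ^ 2) := Real.sqrt_pos.mpr ha2
  have hs1 := Real.sq_sqrt (show (0:ℝ) ≤ 1 + u ^ 2 by positivity)
  have hs2 := Real.sq_sqrt ha2.le
  rw [le_div_iff₀ h1, div_le_iff₀ h2]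
  constructor
  · intro h
    have hsq : (α * Real.sqrt (1 + u ^ 2)) ^ 2 ≤ u ^ 2 := pow_le_pow_left₀ (by positivity) h 2
    rw [mul_pow, hs1] at hsq
    calc α = Real.sqrt (α ^ 2) := (Real.sqrt_sq hα0.le).symm
      _ ≤ Real.sqrt ((u * Real.sqrt (1 - α ^ 2)) ^ 2) := by
          apply Real.sqrt_le_sqrt; rw [mul_pow, hs2]; nlinarith
      _ = u * Real.sqrt (1 - α ^ 2) := Real.sqrt_sq (by positivity)
  · intro h
    have hsq : α ^ 2 ≤ (u * Real.sqrt (1 - α ^ 2)) ^ 2 := pow_le_pow_left₀ hα0.le h 2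
    rw [mul_pow, hs2] at hsq
    calc α * Real.sqrt (1 + u ^ 2) = Real.sqrt (α ^ 2 * (1 + u ^ 2)) := by
          rw [Real.sqrt_mul (sq_nonneg α), Real.sqrt_sq hα0.le]
      _ ≤ Real.sqrt (u ^ 2) := by apply Real.sqrt_le_sqrt; nlinarith
      _ = u := Real.sqrt_sq hu

lemma L2 {α u : ℝ} (hα0 : 0 < α) (hα1 : α < 1) (hu : 0 ≤ u) :
    1 / Real.sqrt (1 + u ^ 2) ≤ α ↔ Real.sqrt (1 - α ^ 2) / α ≤ u := by
  have h1 : (0:ℝ) < Real.sqrt (1 + u ^ 2) := Real.sqrt_pos.mpr (by positivity)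
  have ha2 : (0:ℝ) < 1 - α ^ 2 := by nlinarith
  have hs1 := Real.sq_sqrt (show (0:ℝ) ≤ 1 + u ^ 2 by positivity)
  have hs2 := Real.sq_sqrt ha2.le
  rw [div_le_iff₀ h1, div_le_iff₀ hα0]
  constructor
  · intro h
    have hsq : 1 ≤ (α * Real.sqrt (1 + u ^ 2)) ^ 2 := by
      calc (1:ℝ) = 1 ^ 2 := (one_pow 2).symm
        _ ≤ _ := pow_le_pow_left₀ zero_le_one h 2
    rw [mul_pow, hs1] at hsq
    calc Real.sqrt (1 - α ^ 2) ≤ Real.sqrt ((u * α) ^ 2) := by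
          apply Real.sqrt_le_sqrt; rw [mul_pow]; nlinarith
      _ = u * α := Real.sqrt_sq (by positivity)
  · intro h
    have hsq : 1 - α ^ 2 ≤ (u * α) ^ 2 := by
      calc 1 - α ^ 2 = Real.sqrt (1 - α ^ 2) ^ 2 := hs2.symm
        _ ≤ _ := pow_le_pow_left₀ (Real.sqrt_nonneg _) h 2
    rw [mul_pow] at hsq
    calc (1:ℝ) = Real.sqrt 1 := Real.sqrt_one.symm
      _ ≤ Real.sqrt (α ^ 2 * (1 + u ^ 2)) := by apply Real.sqrt_le_sqrt; nlinarith
      _ = α * Real.sqrt (1 + u ^ 2) := by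
          rw [Real.sqrt_mul (sq_nonneg α), Real.sqrt_sq hα0.le]

theorem sl2_image_compl_disc_iff (γ : SL2) (hγ : 1 < opNorm ↑γ)
    (k k' : Matrix (Fin 2) (Fin 2) ℂ) (lam : ℂ)
    (hk : SU2 k) (hk' : SU2 k') (hlam : 1 ≤ ‖lam‖)
    (hdec : (↑γ : Matrix (Fin 2) (Fin 2) ℂ) = k * Matrix.diagonal ![lam, lam⁻¹] * k')
    (s n : Option ℂ) (hs : s = mobius k'⁻¹ (some 0)) (hn : n = mobius k none)
    (α : ℝ) (hα : α ∈ Set.Ioo (0:ℝ) 1) :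
    mobius ↑γ '' (Dopen s α)ᶜ = Dclosed n α ↔
      opNorm ↑γ = Real.sqrt (1 - α ^ 2) / α := by
  obtain ⟨hα0, hα1⟩ := hα
  have hlam0 : lam ≠ 0 := by
    intro h; rw [h] at hlam; simp at hlam; linarith
  set Dm : Matrix (Fin 2) (Fin 2) ℂ := Matrix.diagonal ![lam, lam⁻¹] with hDm
  have hDdet : Dm.det ≠ 0 := by
    rw [hDm, Matrix.det_diagonal, Fin.prod_univ_two]
    simp [hlam0]
  have hop : opNorm (↑γ : Matrix (Fin 2) (Fin 2) ℂ) = ‖lam‖ :=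
    opNorm_dec hk hk' hlam hdec
  have hD00 : Dm 0 0 = lam := by simp [hDm]
  have hD01 : Dm 0 1 = 0 := by simp [hDm]
  have hD10 : Dm 1 0 = 0 := by simp [hDm]
  have hD11 : Dm 1 1 = lam⁻¹ := by simp [hDm]
  have hdiag_some : ∀ z : ℂ, mobius Dm (some z) = some (lam ^ 2 * z) := by
    intro z
    have hden : Dm 1 0 * z + Dm 1 1 ≠ 0 := by
      rw [hD10, hD11]; simpa using inv_ne_zero hlam0
    simp only [mobius, hD00, hD01, hD10, hD11, zero_mul, zero_add, add_zero]
    rw [if_neg (inv_ne_zero hlam0)]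
    congr 1
    field_simp
  have hdiag_none : mobius Dm none = none := by
    simp [mobius, hD10]
  have hact : mobius (↑γ : Matrix (Fin 2) (Fin 2) ℂ) '' (Dopen s α)ᶜ
      = mobius k '' (mobius Dm '' (mobius k' '' (Dopen s α)ᶜ)) := by
    have hfun : mobius (↑γ : Matrix (Fin 2) (Fin 2) ℂ) = mobius k ∘ mobius Dm ∘ mobius k' := by
      funext x
      rw [hdec, mobius_mul _ _ (su2_det_ne hk'), mobius_mul _ _ hDdet]
      rfl
    rw [hfun, Set.image_comp, Set.image_comp]
  have hks : mobius k' s = some 0 := by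
    rw [hs]; exact su2_mobius_inv_right hk' (some 0)
  have stepA : mobius k' '' (Dopen s α)ᶜ = (Dopen (some 0) α)ᶜ := by
    have hpre : (Dopen s α)ᶜ = mobius k' ⁻¹' (Dopen (some 0) α)ᶜ := by
      ext x
      simp only [Dopen, mem_compl_iff, mem_setOf_eq, mem_preimage, not_lt]
      rw [← hks, su2_isom hk' x s]
    rw [hpre, Set.image_preimage_eq _ (su2_surj hk')]
  have stepC : Dclosed n α = mobius k '' (Dclosed none α) := by
    have hpre : Dclosed none α = mobius k ⁻¹' (Dclosed n α) := by
      ext x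
      simp only [Dclosed, mem_setOf_eq, mem_preimage]
      rw [hn, su2_isom hk x none]
    rw [hpre, Set.image_preimage_eq _ (su2_surj hk)]
  rw [hact, stepA, stepC, hop, Set.image_eq_image (su2_inj hk)]
  -- concrete characterizations
  have ha2 : (0:ℝ) < 1 - α ^ 2 := by nlinarith
  have hsqa : (0:ℝ) < Real.sqrt (1 - α ^ 2) := Real.sqrt_pos.mpr ha2
  have hm0 : (0:ℝ) < ‖lam‖ := by
    simpa [norm_pos_iff] using hlam0
  have hmemL : ∀ w : ℂ, (some w ∈ mobius Dm '' (Dopen (some 0) α)ᶜ ↔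
      α / Real.sqrt (1 - α ^ 2) * ‖lam‖ ^ 2 ≤ ‖w‖) := by
    intro w
    have hcz : ∀ z : ℂ, (some z ∈ (Dopen (some 0) α)ᶜ ↔
        α / Real.sqrt (1 - α ^ 2) ≤ ‖z‖) := by
      intro z
      have hch : chordal (some z) (some 0) =
          ‖z‖ / Real.sqrt (1 + ‖z‖ ^ 2) := by
        simp [chordal]
      simp only [Dopen, mem_compl_iff, mem_setOf_eq, not_lt, hch]
      exact L1 hα0 hα1 (norm_nonneg z)
    constructor
    · rintro ⟨x, hx, hxw⟩
      match x with
      | none => rw [hdiag_none] at hxw; exact absurd hxw (by simp)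
      | some z =>
        rw [hdiag_some z] at hxw
        have hzw : lam ^ 2 * z = w := by
          simpa using hxw
        have hz := (hcz z).mp hx
        have : ‖w‖ = ‖lam‖ ^ 2 * ‖z‖ := by
          rw [← hzw, norm_mul, norm_pow]
        rw [this]
        calc α / Real.sqrt (1 - α ^ 2) * ‖lam‖ ^ 2
            ≤ ‖z‖ * ‖lam‖ ^ 2 := by
              apply mul_le_mul_of_nonneg_right hz (by positivity)
          _ = ‖lam‖ ^ 2 * ‖z‖ := by ring
    · intro h
      refine ⟨some ((lam ^ 2)⁻¹ * w), ?_, ?_⟩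
      · apply (hcz _).mpr
        rw [norm_mul, norm_inv, norm_pow]
        have hmul := mul_le_mul_of_nonneg_right h
          (show (0:ℝ) ≤ (‖lam‖ ^ 2)⁻¹ by positivity)
        calc α / Real.sqrt (1 - α ^ 2)
            = α / Real.sqrt (1 - α ^ 2) * ‖lam‖ ^ 2 * (‖lam‖ ^ 2)⁻¹ := by
              field_simp
          _ ≤ ‖w‖ * (‖lam‖ ^ 2)⁻¹ := hmul
          _ = (‖lam‖ ^ 2)⁻¹ * ‖w‖ := by ring
      · rw [hdiag_some]
        congr 1
        field_simp
  have hmemR : ∀ w : ℂ, (some w ∈ Dclosed none α ↔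
      Real.sqrt (1 - α ^ 2) / α ≤ ‖w‖) := by
    intro w
    have hch : chordal (some w) none = 1 / Real.sqrt (1 + ‖w‖ ^ 2) := by
      simp [chordal]
    simp only [Dclosed, mem_setOf_eq, hch]
    exact L2 hα0 hα1 (norm_nonneg w)
  constructor
  · intro hEq
    have key : ∀ w : ℂ, (α / Real.sqrt (1 - α ^ 2) * ‖lam‖ ^ 2 ≤ ‖w‖ ↔
        Real.sqrt (1 - α ^ 2) / α ≤ ‖w‖) := by
      intro w
      rw [← hmemL w, ← hmemR w, hEq]
    set c : ℝ := Real.sqrt (1 - α ^ 2) / α with hc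
    set d : ℝ := α / Real.sqrt (1 - α ^ 2) with hd
    have hcpos : 0 < c := by positivity
    have hdpos : 0 < d := by positivity
    have key' : ∀ u : ℝ, 0 ≤ u → (d * ‖lam‖ ^ 2 ≤ u ↔ c ≤ u) := by
      intro u hu
      have := key (u : ℂ)
      rwa [Complex.norm_of_nonneg hu] at this
    have h1 : d * ‖lam‖ ^ 2 ≤ c :=
      (key' c hcpos.le).mpr le_rfl
    have h2 : c ≤ d * ‖lam‖ ^ 2 :=
      (key' (d * ‖lam‖ ^ 2) (by positivity)).mp le_rfl
    have hdm : d * ‖lam‖ ^ 2 = c := le_antisymm h1 h2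
    have hcd : c * d = 1 := by
      rw [hc, hd]
      field_simp
    have hm2 : ‖lam‖ ^ 2 = c ^ 2 := by
      linear_combination c * hdm - (‖lam‖ ^ 2) * hcd
    have hfac : (‖lam‖ - c) * (‖lam‖ + c) = 0 := by
      linear_combination hm2
    rcases mul_eq_zero.mp hfac with h | h
    · exact sub_eq_zero.mp h
    · exfalso; nlinarith
  · intro habs
    have hm2 : ‖lam‖ ^ 2 = (Real.sqrt (1 - α ^ 2) / α) ^ 2 := by rw [habs]
    ext y
    match y with
    | none =>
      constructor
      · intro _
        simp only [Dclosed, mem_setOf_eq, chordal_self]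
        exact hα0.le
      · intro _
        refine ⟨none, ?_, hdiag_none⟩
        simp only [Dopen, mem_compl_iff, mem_setOf_eq, not_lt]
        have : chordal none (some 0) = 1 := by
          simp [chordal]
        rw [this]
        exact hα1.le
    | some w =>
      rw [hmemL w, hmemR w]
      have hs2 := Real.sq_sqrt ha2.le
      constructor
      · intro h
        calc Real.sqrt (1 - α ^ 2) / α
            = α / Real.sqrt (1 - α ^ 2) * (Real.sqrt (1 - α ^ 2) / α) ^ 2 := by
              field_simp
          _ = α / Real.sqrt (1 - α ^ 2) * ‖lam‖ ^ 2 := by rw [← hm2]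
          _ ≤ ‖w‖ := h
      · intro h
        calc α / Real.sqrt (1 - α ^ 2) * ‖lam‖ ^ 2
            = α / Real.sqrt (1 - α ^ 2) * (Real.sqrt (1 - α ^ 2) / α) ^ 2 := by rw [hm2]
          _ = Real.sqrt (1 - α ^ 2) / α := by
              field_simp
          _ ≤ ‖w‖ := h
end

section
/- Let γ ∈ SL(2,ℂ) with ‖γ‖ > 1 and ‖γ‖⁴ ≥ 3/2, with Cartan south pole s and north pole n. Then γ maps the closed chordal disc of center s and radius ‖γ‖⁻² into the complement of the open chordal disc D(n, 1/2). -/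
open Complex Set

/- ############ auxiliary development ############ -/

noncomputable def cross (u v : Fin 2 → ℂ) : ℂ := u 0 * v 1 - u 1 * v 0

noncomputable def nrm (u : Fin 2 → ℂ) : ℝ :=
  Real.sqrt (‖u 0‖ ^ 2 + ‖u 1‖ ^ 2)

def vec : Option ℂ → (Fin 2 → ℂ)
  | some z => ![z, 1]
  | none => ![1, 0]

noncomputable def pt (u : Fin 2 → ℂ) : Option ℂ :=
  if u 1 = 0 then none else some (u 0 / u 1)

lemma vec_ne_zero (p : Option ℂ) : vec p ≠ 0 := by
  cases p with
  | none => intro h; simpa [vec] using congrFun h 0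
  | some z => intro h; simpa [vec] using congrFun h 1

lemma vec_ne_zero' (p : Option ℂ) : vec p 0 ≠ 0 ∨ vec p 1 ≠ 0 := by
  cases p <;> simp [vec]

lemma nrm_nonneg (u : Fin 2 → ℂ) : 0 ≤ nrm u := Real.sqrt_nonneg _

lemma nrm_pos (u : Fin 2 → ℂ) (hu : u ≠ 0) : 0 < nrm u := by
  have h : u 0 ≠ 0 ∨ u 1 ≠ 0 := by
    by_contra h
    push_neg at h
    exact hu (funext fun i => by fin_cases i <;> simp [h.1, h.2])
  apply Real.sqrt_pos.2
  rcases h with h | h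
  · have := norm_pos_iff.mpr h
    positivity
  · have := norm_pos_iff.mpr h
    positivity

lemma mobius_eq (g : Matrix (Fin 2) (Fin 2) ℂ) (p : Option ℂ) :
    mobius g p = pt (g.mulVec (vec p)) := by
  cases p with
  | none =>
      simp [mobius, pt, vec, Matrix.mulVec, dotProduct, Fin.sum_univ_two]
  | some z =>
      simp [mobius, pt, vec, Matrix.mulVec, dotProduct, Fin.sum_univ_two]

lemma chordal_vec (p q : Option ℂ) :
    chordal p q = ‖cross (vec p) (vec q)‖ / (nrm (vec p) * nrm (vec q)) := by
  cases p with
  | none =>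
      cases q with
      | none => simp [chordal, cross, nrm, vec]
      | some z => simp [chordal, cross, nrm, vec, add_comm]
  | some z =>
      cases q with
      | none => simp [chordal, cross, nrm, vec, add_comm]
      | some w => simp [chordal, cross, nrm, vec, add_comm]

lemma chordal_comm_s4 (p q : Option ℂ) : chordal p q = chordal q p := by
  cases p <;> cases q <;> simp [chordal, norm_sub_rev, mul_comm]

lemma cross_smul_left (c : ℂ) (u v : Fin 2 → ℂ) : cross (c • u) v = c * cross u v := by
  simp [cross]; ring

lemma nrm_smul (c : ℂ) (u : Fin 2 → ℂ) : nrm (c • u) = ‖c‖ * nrm u := by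
  unfold nrm
  rw [← Real.sqrt_sq (norm_nonneg c), ← Real.sqrt_mul (by positivity)]
  congr 1
  simp [mul_pow]
  ring

lemma ratio_smul (c : ℂ) (hc : c ≠ 0) (u v : Fin 2 → ℂ) :
    ‖cross (c • u) v‖ / (nrm (c • u) * nrm v)
      = ‖cross u v‖ / (nrm u * nrm v) := by
  rw [cross_smul_left, nrm_smul, norm_mul]
  have h0 : ‖c‖ ≠ 0 := norm_ne_zero_iff.mpr hc
  rw [mul_assoc, mul_div_mul_left _ _ h0]

lemma vec_pt (u : Fin 2 → ℂ) (hu : u ≠ 0) : ∃ c : ℂ, c ≠ 0 ∧ vec (pt u) = c • u := by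
  by_cases h : u 1 = 0
  · have h0 : u 0 ≠ 0 := by
      intro h0; exact hu (funext fun i => by fin_cases i <;> simp [h, h0])
    refine ⟨(u 0)⁻¹, inv_ne_zero h0, ?_⟩
    funext i
    fin_cases i <;> simp [pt, h, vec, h0]
  · refine ⟨(u 1)⁻¹, inv_ne_zero h, ?_⟩
    funext i
    fin_cases i <;>
      simp [pt, h, vec, Pi.smul_apply, smul_eq_mul, div_eq_inv_mul] <;> field_simp

lemma chordal_pt_left (u : Fin 2 → ℂ) (hu : u ≠ 0) (q : Option ℂ) :
    chordal (pt u) q = ‖cross u (vec q)‖ / (nrm u * nrm (vec q)) := by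
  obtain ⟨c, hc, hcu⟩ := vec_pt u hu
  rw [chordal_vec, hcu, ratio_smul c hc]

lemma cross_comm (u v : Fin 2 → ℂ) : ‖cross u v‖ = ‖cross v u‖ := by
  have : cross v u = -(cross u v) := by unfold cross; ring
  rw [this, norm_neg]

lemma cross_smul_right (c : ℂ) (u v : Fin 2 → ℂ) : cross u (c • v) = c * cross u v := by
  simp [cross]; ring

lemma chordal_pt_pt (u v : Fin 2 → ℂ) (hu : u ≠ 0) (hv : v ≠ 0) :
    chordal (pt u) (pt v) = ‖cross u v‖ / (nrm u * nrm v) := by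
  rw [chordal_pt_left u hu]
  obtain ⟨c, hc, hcv⟩ := vec_pt v hv
  rw [hcv, cross_smul_right, nrm_smul, norm_mul]
  have h0 : ‖c‖ ≠ 0 := norm_ne_zero_iff.mpr hc
  rw [show nrm u * (‖c‖ * nrm v) = ‖c‖ * (nrm u * nrm v) by ring,
    mul_div_mul_left _ _ h0]

lemma cross_mulVec (g : Matrix (Fin 2) (Fin 2) ℂ) (u v : Fin 2 → ℂ) :
    cross (g.mulVec u) (g.mulVec v) = g.det * cross u v := by
  simp [cross, Matrix.mulVec, dotProduct, Fin.sum_univ_two, Matrix.det_fin_two]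
  ring

lemma su2_entries (k : Matrix (Fin 2) (Fin 2) ℂ) (hk : SU2 k) :
    (starRingEnd ℂ) (k 0 0) * k 0 0 + (starRingEnd ℂ) (k 1 0) * k 1 0 = 1 ∧
    (starRingEnd ℂ) (k 0 0) * k 0 1 + (starRingEnd ℂ) (k 1 0) * k 1 1 = 0 ∧
    (starRingEnd ℂ) (k 0 1) * k 0 0 + (starRingEnd ℂ) (k 1 1) * k 1 0 = 0 ∧
    (starRingEnd ℂ) (k 0 1) * k 0 1 + (starRingEnd ℂ) (k 1 1) * k 1 1 = 1 := by
  have h := hk.2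
  refine ⟨?_, ?_, ?_, ?_⟩ <;>
  · have := congrFun (congrFun h 0) 0
    have h01 := congrFun (congrFun h 0) 1
    have h10 := congrFun (congrFun h 1) 0
    have h11 := congrFun (congrFun h 1) 1
    simp [Matrix.mul_apply, Fin.sum_univ_two, Matrix.conjTranspose_apply,
      Matrix.one_apply] at this h01 h10 h11
    first
      | exact this | exact h01 | exact h10 | exact h11

lemma nrm_mulVec_su2 (k : Matrix (Fin 2) (Fin 2) ℂ) (hk : SU2 k) (u : Fin 2 → ℂ) :
    nrm (k.mulVec u) = nrm u := by
  obtain ⟨e00, e01, e10, e11⟩ := su2_entries k hk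
  unfold nrm
  congr 1
  have key : (↑(‖(k.mulVec u) 0‖ ^ 2 + ‖(k.mulVec u) 1‖ ^ 2) : ℂ)
      = ↑(‖u 0‖ ^ 2 + ‖u 1‖ ^ 2) := by
    push_cast [Complex.sq_norm, ← Complex.mul_conj]
    simp only [Matrix.mulVec, dotProduct, Fin.sum_univ_two, map_add, map_mul]
    linear_combination (u 0 * (starRingEnd ℂ) (u 0)) * e00 +
      (u 1 * (starRingEnd ℂ) (u 0)) * e01 + (u 0 * (starRingEnd ℂ) (u 1)) * e10 +
      (u 1 * (starRingEnd ℂ) (u 1)) * e11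
  exact_mod_cast key

open Matrix in
lemma su2_conjTranspose (k : Matrix (Fin 2) (Fin 2) ℂ) (hk : SU2 k) : SU2 kᴴ := by
  constructor
  · rw [Matrix.det_conjTranspose, hk.1]; simp
  · rw [Matrix.conjTranspose_conjTranspose]
    exact (mul_eq_one_comm).2 hk.2

open Matrix in
lemma su2_inv (k : Matrix (Fin 2) (Fin 2) ℂ) (hk : SU2 k) : k⁻¹ = kᴴ :=
  Matrix.inv_eq_left_inv hk.2

lemma nrm_le_opNorm (g : Matrix (Fin 2) (Fin 2) ℂ) (u : Fin 2 → ℂ) :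
    nrm (g.mulVec u) ≤ opNorm g * nrm u := by
  have h := (LinearMap.toContinuousLinearMap (Matrix.toEuclideanLin g)).le_opNorm
    ((WithLp.equiv 2 (Fin 2 → ℂ)).symm u)
  have e1 : ‖(WithLp.equiv 2 (Fin 2 → ℂ)).symm u‖ = nrm u := by
    rw [EuclideanSpace.norm_eq]
    unfold nrm
    congr 1
    simp [Fin.sum_univ_two]
  have e2 : ‖(LinearMap.toContinuousLinearMap (Matrix.toEuclideanLin g))
      ((WithLp.equiv 2 (Fin 2 → ℂ)).symm u)‖ = nrm (g.mulVec u) := by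
    have : (LinearMap.toContinuousLinearMap (Matrix.toEuclideanLin g))
        ((WithLp.equiv 2 (Fin 2 → ℂ)).symm u)
        = (WithLp.equiv 2 (Fin 2 → ℂ)).symm (g.mulVec u) := by
      simp [LinearMap.coe_toContinuousLinearMap']
    rw [this, EuclideanSpace.norm_eq]
    unfold nrm
    congr 1
    simp [Fin.sum_univ_two]
  rw [e1, e2] at h
  exact h

lemma nrm_e2 : nrm ![(0:ℂ), 1] = 1 := by simp [nrm]

lemma nrm_e1 : nrm ![(1:ℂ), 0] = 1 := by simp [nrm]

lemma final_ineq (L M p q : ℝ) (hL : 1 < L) (hL4 : 3/2 ≤ L ^ 4) (hM1 : 1 ≤ M)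
    (hMleL : M ≤ L) (hp : 0 ≤ p) (hq : 0 < q) (hkey : p ^ 2 * L ^ 4 ≤ p ^ 2 + q ^ 2) :
    1/2 ≤ M⁻¹ * q / Real.sqrt ((M * p) ^ 2 + (M⁻¹ * q) ^ 2) := by
  have hMpos : (0:ℝ) < M := lt_of_lt_of_le one_pos hM1
  have hMi : 0 < M⁻¹ := by positivity
  have hM4 : M ^ 4 * p ^ 2 ≤ 3 * q ^ 2 := by
    have h1 : M ^ 4 ≤ L ^ 4 := pow_le_pow_left₀ (le_of_lt hMpos) hMleL 4
    nlinarith [mul_le_mul_of_nonneg_right h1 (sq_nonneg p), hkey, hL4, sq_nonneg p]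
  have hM2p2 : M ^ 2 * p ^ 2 ≤ 3 * (M⁻¹ * q) ^ 2 := by
    have e : M⁻¹ ^ 2 * (M ^ 4 * p ^ 2) = M ^ 2 * p ^ 2 := by
      field_simp
    calc M ^ 2 * p ^ 2 = M⁻¹ ^ 2 * (M ^ 4 * p ^ 2) := e.symm
    _ ≤ M⁻¹ ^ 2 * (3 * q ^ 2) := mul_le_mul_of_nonneg_left hM4 (by positivity)
    _ = 3 * (M⁻¹ * q) ^ 2 := by ring
  have hsumpos : 0 < (M * p) ^ 2 + (M⁻¹ * q) ^ 2 := by positivity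
  have hDpos : 0 < Real.sqrt ((M * p) ^ 2 + (M⁻¹ * q) ^ 2) := Real.sqrt_pos.2 hsumpos
  have hDle : Real.sqrt ((M * p) ^ 2 + (M⁻¹ * q) ^ 2) ≤ 2 * (M⁻¹ * q) := by
    have h2 : (M * p) ^ 2 + (M⁻¹ * q) ^ 2 ≤ (2 * (M⁻¹ * q)) ^ 2 := by nlinarith [hM2p2]
    calc Real.sqrt ((M * p) ^ 2 + (M⁻¹ * q) ^ 2)
        ≤ Real.sqrt ((2 * (M⁻¹ * q)) ^ 2) := Real.sqrt_le_sqrt h2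
    _ = 2 * (M⁻¹ * q) := Real.sqrt_sq (by positivity)
  rw [le_div_iff₀ hDpos]
  nlinarith [hDle]

theorem sl2_contracts_small_disc (γ : SL2) (hγ : 1 < opNorm ↑γ)
    (hγ4 : 3/2 ≤ opNorm ↑γ ^ 4)
    (k k' : Matrix (Fin 2) (Fin 2) ℂ) (lam : ℂ)
    (hk : SU2 k) (hk' : SU2 k') (hlam : 1 ≤ ‖lam‖)
    (hdec : (↑γ : Matrix (Fin 2) (Fin 2) ℂ) = k * Matrix.diagonal ![lam, lam⁻¹] * k')
    (s n : Option ℂ) (hs : s = mobius k'⁻¹ (some 0)) (hn : n = mobius k none) :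
    mobius ↑γ '' Dclosed s ((opNorm ↑γ ^ 2)⁻¹) ⊆ (Dopen n (1/2))ᶜ := by
  intro v hv
  obtain ⟨w, hw, rfl⟩ := hv
  set g : Matrix (Fin 2) (Fin 2) ℂ := ↑γ with hg
  set L : ℝ := opNorm g with hLdef
  set a : Matrix (Fin 2) (Fin 2) ℂ := Matrix.diagonal ![lam, lam⁻¹] with ha
  have hk'1 : k' * k'.conjTranspose = 1 := mul_eq_one_comm.2 hk'.2
  have hk1 : k * k.conjTranspose = 1 := mul_eq_one_comm.2 hk.2
  have hk'H : SU2 k'.conjTranspose := su2_conjTranspose k' hk'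
  have hkH : SU2 k.conjTranspose := su2_conjTranspose k hk
  have hMpos : (0:ℝ) < ‖lam‖ := lt_of_lt_of_le one_pos hlam
  have hlam0 : lam ≠ 0 := by
    intro h; rw [h] at hMpos; simp at hMpos
  set u : Fin 2 → ℂ := vec w with hu
  have hu0 : u ≠ 0 := vec_ne_zero w
  set x : Fin 2 → ℂ := k'.mulVec u with hx
  -- x ≠ 0
  have hxu : k'.conjTranspose.mulVec x = u := by
    rw [hx, Matrix.mulVec_mulVec, hk'.2, Matrix.one_mulVec]
  have hx0 : x ≠ 0 := by
    intro h; rw [h, Matrix.mulVec_zero] at hxu; exact hu0 hxu.symm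
  -- the vector representing s
  set A : Fin 2 → ℂ := k'.conjTranspose.mulVec ![0, 1] with hA
  have hk'A : k'.mulVec A = ![0, 1] := by
    rw [hA, Matrix.mulVec_mulVec, hk'1, Matrix.one_mulVec]
  have hA0 : A ≠ 0 := by
    intro h
    rw [h, Matrix.mulVec_zero] at hk'A
    have := congrFun hk'A.symm 1
    simp at this
  have hsA : s = pt A := by
    have hv0 : vec (some (0:ℂ)) = ![0, 1] := by
      funext i; fin_cases i <;> simp [vec]
    rw [hs, mobius_eq, su2_inv k' hk', hv0, hA]
  -- chordal w s = |x 0| / nrm x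
  have hnrmA : nrm A = 1 := by rw [hA, nrm_mulVec_su2 _ hk'H, nrm_e2]
  have hnrmxu : nrm x = nrm u := by rw [hx, nrm_mulVec_su2 _ hk']
  have hcrossA : cross A u = -(x 0) := by
    have h1 : cross (k'.mulVec A) (k'.mulVec u) = k'.det * cross A u := cross_mulVec k' A u
    rw [hk'A, hk'.1, one_mul] at h1
    rw [← h1, ← hx]
    simp [cross]
  have hchord_ws : chordal w s = ‖x 0‖ / nrm x := by
    rw [chordal_comm_s4, hsA, chordal_pt_left A hA0 w, hcrossA, norm_neg,
      hnrmA, one_mul, ← hu, hnrmxu]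
  -- set up the reals
  set p : ℝ := ‖x 0‖ with hp
  set q : ℝ := ‖x 1‖ with hq
  set M : ℝ := ‖lam‖ with hM
  have hppos : 0 ≤ p := norm_nonneg _
  have hqpos : 0 ≤ q := norm_nonneg _
  have hnrmx : nrm x = Real.sqrt (p ^ 2 + q ^ 2) := rfl
  have hnrmxpos : 0 < nrm x := nrm_pos x hx0
  have hN2 : nrm x ^ 2 = p ^ 2 + q ^ 2 := by
    rw [hnrmx, Real.sq_sqrt (by positivity)]
  -- hypothesis: p ≤ L⁻² nrm x
  have hwle : chordal w s ≤ (L ^ 2)⁻¹ := hw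
  have hL0 : (0:ℝ) < L := lt_trans one_pos hγ
  have hple : p * L ^ 2 ≤ nrm x := by
    rw [hchord_ws, div_le_iff₀ hnrmxpos] at hwle
    calc p * L ^ 2 = p / (L^2)⁻¹ := by field_simp
    _ ≤ nrm x := by
        rw [div_le_iff₀ (by positivity)]
        calc p ≤ (L ^ 2)⁻¹ * nrm x := hwle
        _ = nrm x * (L^2)⁻¹ := by ring
  have hkey : p ^ 2 * L ^ 4 ≤ p ^ 2 + q ^ 2 := by
    have := mul_self_le_mul_self (by positivity : (0:ℝ) ≤ p * L ^ 2) hple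
    nlinarith [hN2]
  -- M ≤ L
  have hMleL : M ≤ L := by
    have h1 := nrm_le_opNorm g (k'.conjTranspose.mulVec ![1, 0])
    have haxe : a.mulVec ![1, 0] = ![lam, 0] := by
      funext i; fin_cases i <;> simp [ha, Matrix.mulVec_diagonal]
    have h2 : g.mulVec (k'.conjTranspose.mulVec ![1, 0]) = k.mulVec ![lam, 0] := by
      rw [hdec, Matrix.mulVec_mulVec,
        Matrix.mul_assoc (k * a) k' k'.conjTranspose, hk'1, Matrix.mul_one,
        ← Matrix.mulVec_mulVec, haxe]
    rw [h2, nrm_mulVec_su2 _ hk, nrm_mulVec_su2 _ hk'H, nrm_e1, mul_one] at h1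
    calc M = nrm ![lam, 0] := by simp [nrm, hM]
    _ ≤ L := h1
  -- q > 0
  have hL4 : (3:ℝ)/2 ≤ L ^ 4 := hγ4
  have hqpos' : 0 < q := by
    rcases lt_or_eq_of_le hqpos with h | h
    · exact h
    · exfalso
      have hp0 : 0 < p := by
        rcases lt_or_eq_of_le hppos with h2 | h2
        · exact h2
        · exfalso
          apply hx0
          funext i
          fin_cases i
          · simpa [hp] using norm_eq_zero.1 h2.symm
          · simpa [hq] using norm_eq_zero.1 h.symm
      nlinarith
  -- the image point
  have hgu0 : g.mulVec u ≠ 0 := by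
    intro h
    have : (g⁻¹ * g).mulVec u = 0 := by
      rw [← Matrix.mulVec_mulVec, h, Matrix.mulVec_zero]
    rw [Matrix.nonsing_inv_mul g (by rw [hg]; simp [γ.prop]), Matrix.one_mulVec] at this
    exact hu0 this
  have hke0 : k.mulVec ![1, 0] ≠ 0 := by
    intro h
    have h2 : k.conjTranspose.mulVec (k.mulVec ![1, 0]) = ![1, 0] := by
      rw [Matrix.mulVec_mulVec, hk.2, Matrix.one_mulVec]
    rw [h, Matrix.mulVec_zero] at h2
    have := congrFun h2.symm 0
    simp at this
  have hnvec : n = pt (k.mulVec ![1, 0]) := by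
    rw [hn, mobius_eq]
    congr 1
  have hgux : g.mulVec u = k.mulVec (a.mulVec x) := by
    rw [hdec, hx, Matrix.mulVec_mulVec, Matrix.mulVec_mulVec, Matrix.mul_assoc]
  have hax0 : (a.mulVec x) 0 = lam * x 0 := by
    simp [ha, Matrix.mulVec_diagonal]
  have hax1 : (a.mulVec x) 1 = lam⁻¹ * x 1 := by
    simp [ha, Matrix.mulVec_diagonal]
  have hchord_gn : chordal (mobius g w) n
      = M⁻¹ * q / Real.sqrt ((M * p) ^ 2 + (M⁻¹ * q) ^ 2) := by
    rw [mobius_eq, ← hu, hnvec, chordal_pt_pt _ _ hgu0 hke0, hgux]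
    have hcr : cross (k.mulVec (a.mulVec x)) (k.mulVec ![1, 0])
        = k.det * cross (a.mulVec x) ![1, 0] := cross_mulVec k _ _
    rw [hcr, hk.1, one_mul, nrm_mulVec_su2 _ hk, nrm_mulVec_su2 _ hk, nrm_e1, mul_one]
    have hc2 : cross (a.mulVec x) ![1, 0] = -(lam⁻¹ * x 1) := by
      simp [cross, hax0, hax1]
    rw [hc2, norm_neg, norm_mul, norm_inv]
    have hden : nrm (a.mulVec x)
        = Real.sqrt ((M * p) ^ 2 + (M⁻¹ * q) ^ 2) := by
      unfold nrm
      rw [hax0, hax1, norm_mul, norm_mul, norm_inv]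
    rw [hden, hM, hp, hq]
  -- final inequality
  simp only [Dopen, Set.mem_compl_iff, Set.mem_setOf_eq, not_lt]
  rw [hchord_gn]
  exact final_ineq L M p q hγ hγ4 hlam hMleL hppos hqpos' hkey
end

section
/- Let (Aₙ) and (Bₙ) be two sequences of events in a probability space such that: (i) the σ-algebras generated by (Aₙ)ₙ and by (Bₙ)ₙ are independent; (ii) almost surely, infinitely many of the Bₙ occur; (iii) P(Aₙ) → 1 as n → ∞. Then almost surely, infinitely many of the events Aₙ ∩ Bₙ occur. -/
open MeasureTheory Filter ProbabilityTheory

theorem limsup_inter_of_indep_tendsto_one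
    {Ω : Type*} [MeasurableSpace Ω] (μ : Measure Ω) [IsProbabilityMeasure μ]
    (A B : ℕ → Set Ω) (hA : ∀ n, MeasurableSet (A n)) (hB : ∀ n, MeasurableSet (B n))
    (hindep : Indep (MeasurableSpace.generateFrom (Set.range A))
      (MeasurableSpace.generateFrom (Set.range B)) μ)
    (hBio : ∀ᵐ ω ∂μ, ω ∈ Filter.limsup B Filter.atTop)
    (hA1 : Filter.Tendsto (fun n => μ (A n)) Filter.atTop (nhds 1)) :
    ∀ᵐ ω ∂μ, ω ∈ Filter.limsup (fun n => A n ∩ B n) Filter.atTop := by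
  have hBle : MeasurableSpace.generateFrom (Set.range B) ≤ ‹MeasurableSpace Ω› :=
    MeasurableSpace.generateFrom_le (by rintro s ⟨n, rfl⟩; exact hB n)
  have hmul : ∀ s t, MeasurableSet[MeasurableSpace.generateFrom (Set.range A)] s →
      MeasurableSet[MeasurableSpace.generateFrom (Set.range B)] t →
      μ (s ∩ t) = μ s * μ t := (Indep_iff _ _ _).1 hindep
  have key : ∀ k, μ (⋃ n, ⋃ _ : k ≤ n, A n ∩ B n) = 1 := by
    intro k
    refine le_antisymm prob_le_one ?_
    refine ENNReal.le_of_forall_pos_le_add fun ε hε _ => ?_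
    -- choose m ≥ k with μ (A n) ≥ 1 - ε for n ≥ m
    have hlt : (1 : ENNReal) - ε < 1 :=
      ENNReal.sub_lt_self ENNReal.one_ne_top one_ne_zero (by exact_mod_cast hε.ne')
    obtain ⟨m₀, hm₀⟩ := Filter.eventually_atTop.1 (hA1.eventually (eventually_ge_nhds hlt))
    set m := max m₀ k with hm
    -- disjointify the B's from m on
    set T : ℕ → Set Ω := disjointed (fun j => B (m + j)) with hT
    have hTsub : ∀ i, T i ⊆ B (m + i) := fun i => disjointed_subset _ i
    have hTgen : ∀ i, MeasurableSet[MeasurableSpace.generateFrom (Set.range B)] (T i) :=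
      MeasurableSet.disjointed (fun j => MeasurableSpace.measurableSet_generateFrom ⟨m + j, rfl⟩)
    have hTmeas : ∀ i, MeasurableSet (T i) := fun i => hBle _ (hTgen i)
    have hTdisj : Pairwise (Function.onFun Disjoint T) := disjoint_disjointed _
    have hTunion : ⋃ i, T i = ⋃ i, B (m + i) := iUnion_disjointed
    have hBfull : μ (⋃ i, B (m + i)) = 1 := by
      rw [← prob_compl_eq_zero_iff (MeasurableSet.iUnion fun i => hB _)]
      have hae' : ∀ᵐ ω ∂μ, ω ∈ ⋃ i, B (m + i) := by
        filter_upwards [hBio] with ω h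
        obtain ⟨n, hn, hmem⟩ := Filter.frequently_atTop.1 (mem_limsup_iff_frequently_mem.1 h) m
        exact Set.mem_iUnion.2 ⟨n - m, by rwa [Nat.add_sub_cancel' hn]⟩
      exact ae_iff.1 hae'
    have hsum : μ (⋃ i, A (m + i) ∩ T i) = ∑' i, μ (A (m + i) ∩ T i) :=
      measure_iUnion (fun i j hij => ((hTdisj hij).mono Set.inter_subset_right
        Set.inter_subset_right)) (fun i => (hA _).inter (hTmeas i))
    have hineq1 : (1 : ENNReal) - ε ≤ μ (⋃ i, A (m + i) ∩ T i) := by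
      rw [hsum]
      calc (1 : ENNReal) - ε = (1 - ε) * μ (⋃ i, T i) := by
            rw [hTunion, hBfull, mul_one]
        _ = ∑' i, (1 - ε) * μ (T i) := by
            rw [ENNReal.tsum_mul_left, measure_iUnion hTdisj hTmeas]
        _ ≤ ∑' i, μ (A (m + i) ∩ T i) := by
            refine ENNReal.tsum_le_tsum fun i => ?_
            rw [hmul _ _ (MeasurableSpace.measurableSet_generateFrom ⟨m + i, rfl⟩) (hTgen i)]
            exact mul_le_mul_left (hm₀ (m + i) (le_trans (le_max_left _ _) (Nat.le_add_right _ _))) _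
    have hsubset : (⋃ i, A (m + i) ∩ T i) ⊆ ⋃ n, ⋃ _ : k ≤ n, A n ∩ B n := by
      refine Set.iUnion_subset fun i => ?_
      refine Set.subset_iUnion₂_of_subset (m + i) (le_trans (le_max_right _ _) (Nat.le_add_right _ _)) ?_
      exact Set.inter_subset_inter_right _ (hTsub i)
    calc (1 : ENNReal) ≤ (1 - ε) + ε := le_tsub_add
      _ ≤ μ (⋃ n, ⋃ _ : k ≤ n, A n ∩ B n) + ε :=
          add_le_add_left (le_trans hineq1 (measure_mono hsubset)) _
  -- conclude
  have hae : ∀ k : ℕ, ∀ᵐ ω ∂μ, ω ∈ ⋃ n, ⋃ _ : k ≤ n, A n ∩ B n := by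
    intro k
    have hmeas : MeasurableSet (⋃ n, ⋃ _ : k ≤ n, A n ∩ B n) :=
      MeasurableSet.iUnion fun n => MeasurableSet.iUnion fun _ => (hA n).inter (hB n)
    exact (mem_ae_iff_prob_eq_one hmeas).2 (key k)
  filter_upwards [ae_all_iff.2 hae] with ω hω
  rw [mem_limsup_iff_frequently_mem, Filter.frequently_atTop]
  intro k
  obtain ⟨n, hn, hmem⟩ := Set.mem_iUnion₂.1 (hω k)
  exact ⟨n, hn, hmem⟩
end

section
/- Let h, h̃ : [1,∞) → (0,∞) with h nondecreasing and ∫₁^∞ dt/h(t) = ∞. Then there exists a nondecreasing positive function h̃ with h̃(t) → ∞, h̃(t)/h(t) → ∞, and ∫₁^∞ dt/h̃(t) = ∞. -/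
open MeasureTheory Filter
open scoped ENNReal

theorem exists_faster_divergent_function (h : ℝ → ℝ)
    (hpos : ∀ t : ℝ, 1 ≤ t → 0 < h t) (hmono : MonotoneOn h (Set.Ici 1))
    (hdiv : ∫⁻ t in Set.Ioi (1:ℝ), ENNReal.ofReal (1 / h t) = ⊤) :
    ∃ ht : ℝ → ℝ, (∀ t : ℝ, 1 ≤ t → 0 < ht t) ∧ MonotoneOn ht (Set.Ici 1) ∧
      Tendsto ht atTop atTop ∧
      Tendsto (fun t => ht t / h t) atTop atTop ∧
      ∫⁻ t in Set.Ioi (1:ℝ), ENNReal.ofReal (1 / ht t) = ⊤ := by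
  classical
  set h' : ℝ → ℝ := fun t => h (max t 1) with hh'
  have h'mono : Monotone h' := fun s t hst =>
    hmono (Set.mem_Ici.2 (le_max_right s 1)) (Set.mem_Ici.2 (le_max_right t 1))
      (max_le_max hst le_rfl)
  have h'pos : ∀ t, 0 < h' t := fun t => hpos _ (le_max_right t 1)
  have h'ge : ∀ t, h 1 ≤ h' t := fun t =>
    hmono (Set.mem_Ici.2 le_rfl) (Set.mem_Ici.2 (le_max_right t 1)) (le_max_right t 1)
  have h'eq : ∀ t : ℝ, 1 ≤ t → h' t = h t := fun t ht => by
    rw [hh']; simp [max_eq_left ht]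
  set g : ℝ → ℝ≥0∞ := fun t => ENNReal.ofReal (1 / h' t) with hg
  set ν : Measure ℝ := volume.withDensity g with hν
  have νapp : ∀ s : Set ℝ, MeasurableSet s → ν s = ∫⁻ t in s, g t := fun s hs =>
    withDensity_apply g hs
  have νIoi1 : ν (Set.Ioi 1) = ⊤ := by
    rw [νapp _ measurableSet_Ioi, ← hdiv]
    refine setLIntegral_congr_fun measurableSet_Ioi
      (fun t ht => ?_)
    rw [hg]; simp only; rw [h'eq t (le_of_lt ht)]
  have gbound : ∀ t, g t ≤ ENNReal.ofReal (1 / h 1) := fun t =>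
    ENNReal.ofReal_le_ofReal (one_div_le_one_div_of_le (hpos 1 le_rfl) (h'ge t))
  have νfin : ∀ x b : ℝ, ν (Set.Ioc x b) < ⊤ := by
    intro x b
    rw [νapp _ measurableSet_Ioc]
    calc ∫⁻ t in Set.Ioc x b, g t
        ≤ ∫⁻ _ in Set.Ioc x b, ENNReal.ofReal (1 / h 1) :=
          lintegral_mono fun t => gbound t
      _ = ENNReal.ofReal (1 / h 1) * volume (Set.Ioc x b) := by
          rw [setLIntegral_const]
      _ < ⊤ := ENNReal.mul_lt_top ENNReal.ofReal_lt_top measure_Ioc_lt_top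
  have νsing : ∀ x : ℝ, ν {x} = 0 := by
    intro x
    rw [νapp _ (measurableSet_singleton x)]
    exact setLIntegral_measure_zero _ _ (measure_singleton x)
  have νtail : ∀ x : ℝ, 1 ≤ x → ν (Set.Ioi x) = ⊤ := by
    intro x hx
    have hsplit : Set.Ioc 1 x ∪ Set.Ioi x = Set.Ioi (1:ℝ) := Set.Ioc_union_Ioi_eq_Ioi hx
    have hdisj : Disjoint (Set.Ioc (1:ℝ) x) (Set.Ioi x) := Set.Ioc_disjoint_Ioi le_rfl
    have htop := νIoi1
    rw [← hsplit, measure_union hdisj measurableSet_Ioi] at htop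
    by_contra hne
    exact absurd htop (ENNReal.add_ne_top.2 ⟨(νfin 1 x).ne, hne⟩)
  have key : ∀ x : ℝ, ∀ n : ℕ, ∃ b : ℝ, x + 1 ≤ b ∧
      (1 ≤ x → (n : ℝ≥0∞) ≤ ν (Set.Ico x b)) := by
    intro x n
    by_cases hx : 1 ≤ x
    · have hU : (⋃ k : ℕ, Set.Ioc x (x + 1 + k)) = Set.Ioi x := by
        ext t
        simp only [Set.mem_iUnion, Set.mem_Ioc, Set.mem_Ioi]
        constructor
        · rintro ⟨k, hk, _⟩; exact hk
        · intro htx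
          obtain ⟨k, hk⟩ := exists_nat_ge (t - x - 1)
          exact ⟨k, htx, by linarith⟩
      have hdir : Directed (· ⊆ ·) fun k : ℕ => Set.Ioc x (x + 1 + k) := by
        refine Monotone.directed_le fun i j hij => ?_
        refine Set.Ioc_subset_Ioc le_rfl ?_
        have : (i : ℝ) ≤ j := Nat.cast_le.2 hij
        linarith
      have hsup : ν (Set.Ioi x) = ⨆ k : ℕ, ν (Set.Ioc x (x + 1 + (k : ℝ))) := by
        rw [← hU]; exact hdir.measure_iUnion
      obtain ⟨k, hk⟩ : ∃ k : ℕ, (n : ℝ≥0∞) < ν (Set.Ioc x (x + 1 + k)) := by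
        have hlt : (n : ℝ≥0∞) < ⨆ k : ℕ, ν (Set.Ioc x (x + 1 + (k : ℝ))) := by
          rw [← hsup, νtail x hx]; exact ENNReal.natCast_lt_top n
        exact lt_iSup_iff.1 hlt
      refine ⟨x + 1 + k, le_add_of_nonneg_right (Nat.cast_nonneg k), fun _ => ?_⟩
      have hb : ν (Set.Ioc x (x + 1 + k)) ≤ ν (Set.Ico x (x + 1 + k)) := by
        have hsub : Set.Ioc x (x + 1 + k) ⊆ Set.Ico x (x + 1 + k) ∪ {x + 1 + k} := by
          intro t ht
          rcases lt_or_eq_of_le ht.2 with h1 | h1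
          · exact Or.inl ⟨ht.1.le, h1⟩
          · exact Or.inr (by simp [h1])
        refine le_trans (measure_mono hsub) (le_trans (measure_union_le _ _) ?_)
        rw [νsing]; simp
      exact le_trans hk.le hb
    · exact ⟨x + 1, le_rfl, fun h1 => absurd h1 hx⟩
  choose f hf1 hf2 using key
  set a : ℕ → ℝ := fun n => Nat.rec 1 (fun k ak => f ak (k + 1)) n with ha
  have ha0 : a 0 = 1 := rfl
  have hastep : ∀ n, a n + 1 ≤ a (n + 1) := fun n => hf1 (a n) (n + 1)
  have hage1 : ∀ n, 1 ≤ a n := by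
    intro n
    induction n with
    | zero => exact le_rfl
    | succ k ih => linarith [hastep k]
  have hchunk : ∀ n : ℕ, ((n + 1 : ℕ) : ℝ≥0∞) ≤ ν (Set.Ico (a n) (a (n + 1))) :=
    fun n => hf2 (a n) (n + 1) (hage1 n)
  have hamono : StrictMono a :=
    strictMono_nat_of_lt_succ fun n => lt_of_lt_of_le (by linarith) (hastep n)
  have haunb : ∀ n : ℕ, (n : ℝ) + 1 ≤ a n := by
    intro n
    induction n with
    | zero => norm_num [ha0]
    | succ k ih => push_cast; linarith [hastep k]
  have hex : ∀ t : ℝ, ∃ n : ℕ, t < a (n + 1) := by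
    intro t
    obtain ⟨n, hn⟩ := exists_nat_gt t
    have hna : (n : ℝ) ≤ a (n + 1) := by
      have := haunb (n + 1); push_cast at this; linarith
    exact ⟨n, hn.trans_le hna⟩
  set m : ℝ → ℕ := fun t => Nat.find (hex t) with hmdef
  have hmlt : ∀ t, t < a (m t + 1) := fun t => Nat.find_spec (hex t)
  have hmle : ∀ t (n : ℕ), t < a (n + 1) → m t ≤ n := fun t n hn => Nat.find_min' (hex t) hn
  have hmge : ∀ t : ℝ, 1 ≤ t → a (m t) ≤ t := by
    intro t htt
    rcases Nat.eq_zero_or_pos (m t) with h0 | hp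
    · rw [h0, ha0]; exact htt
    · by_contra hc
      push_neg at hc
      obtain ⟨k, hk⟩ := Nat.exists_eq_succ_of_ne_zero hp.ne'
      rw [hk] at hc
      have := hmle t k hc
      omega
  have hmval : ∀ (n : ℕ) (t : ℝ), a n ≤ t → t < a (n + 1) → m t = n := by
    intro n t h1 h2
    have hle : m t ≤ n := hmle t n h2
    have hge : n ≤ m t := by
      have hlt : a n < a (m t + 1) := lt_of_le_of_lt h1 (hmlt t)
      exact Nat.lt_succ_iff.1 (hamono.lt_iff_lt.1 hlt)
    omega
  have mtend : Tendsto m atTop atTop := by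
    refine tendsto_atTop.2 fun n => eventually_atTop.2 ⟨a n, fun t htt => ?_⟩
    have hlt : a n < a (m t + 1) := lt_of_le_of_lt htt (hmlt t)
    exact Nat.lt_succ_iff.1 (hamono.lt_iff_lt.1 hlt)
  set F : ℝ → ℝ := fun t => ((m t : ℝ) + 1) * h' t with hF
  have Fmono : Monotone F := by
    intro s t hst
    have hms : (m s : ℝ) + 1 ≤ (m t : ℝ) + 1 := by
      have h1 := hmle s (m t) (lt_of_le_of_lt hst (hmlt t))
      have : (m s : ℝ) ≤ (m t : ℝ) := Nat.cast_le.2 h1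
      linarith
    exact mul_le_mul hms (h'mono hst) (h'pos s).le (by positivity)
  have Fpos : ∀ t, 0 < F t := fun t => mul_pos (by positivity) (h'pos t)
  have mcasttend : Tendsto (fun t => (m t : ℝ) + 1) atTop atTop :=
    tendsto_atTop_add_const_right _ 1 (tendsto_natCast_atTop_atTop.comp mtend)
  refine ⟨F, fun t _ => Fpos t, Fmono.monotoneOn _, ?_, ?_, ?_⟩
  · have h1pos : 0 < h 1 := hpos 1 le_rfl
    refine tendsto_atTop_mono (fun t => ?_) (mcasttend.atTop_mul_const h1pos)
    exact mul_le_mul_of_nonneg_left (h'ge t) (by positivity)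
  · have heq : (fun t => F t / h t) =ᶠ[atTop] fun t => (m t : ℝ) + 1 := by
      filter_upwards [eventually_ge_atTop (1 : ℝ)] with t htt
      rw [hF]
      simp only
      rw [h'eq t htt, mul_div_assoc, div_self (hpos t htt).ne', mul_one]
    exact Tendsto.congr' heq.symm mcasttend
  · have hUnion : Set.Ici (1:ℝ) = ⋃ n, Set.Ico (a n) (a (n + 1)) := by
      ext t
      simp only [Set.mem_iUnion, Set.mem_Ico, Set.mem_Ici]
      constructor
      · intro htt; exact ⟨m t, hmge t htt, hmlt t⟩
      · rintro ⟨n, h1, _⟩; exact le_trans (hage1 n) h1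
    have hdisjI : Pairwise (Function.onFun Disjoint fun n => Set.Ico (a n) (a (n + 1))) := by
      intro i j hij
      rcases hij.lt_or_gt with hl | hl
      · exact Set.Ico_disjoint_Ico.2
          (le_trans (min_le_left _ _) (le_trans (hamono.le_iff_le.2 hl) (le_max_right _ _)))
      · exact Set.Ico_disjoint_Ico.2
          (le_trans (min_le_right _ _) (le_trans (hamono.le_iff_le.2 hl) (le_max_left _ _)))
    have hterm : ∀ n : ℕ, (1 : ℝ≥0∞) ≤
        ∫⁻ t in Set.Ico (a n) (a (n + 1)), ENNReal.ofReal (1 / F t) := by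
      intro n
      have hcongr : ∫⁻ t in Set.Ico (a n) (a (n + 1)), ENNReal.ofReal (1 / F t)
          = ∫⁻ t in Set.Ico (a n) (a (n + 1)), ENNReal.ofReal (1 / ((n : ℝ) + 1)) * g t := by
        refine setLIntegral_congr_fun measurableSet_Ico
          (fun t htmem => ?_)
        have hmt : m t = n := hmval n t htmem.1 htmem.2
        rw [hF, hg]
        simp only
        rw [hmt, ← ENNReal.ofReal_mul (by positivity), div_mul_div_comm, one_mul]
      rw [hcongr, lintegral_const_mul' _ _ ENNReal.ofReal_ne_top, ← νapp _ measurableSet_Ico]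
      calc (1 : ℝ≥0∞)
          = ENNReal.ofReal (1 / ((n : ℝ) + 1)) * ((n + 1 : ℕ) : ℝ≥0∞) := by
            rw [← ENNReal.ofReal_natCast, ← ENNReal.ofReal_mul (by positivity)]
            push_cast
            rw [one_div_mul_cancel (by positivity)]
            simp
        _ ≤ _ := mul_le_mul_right (hchunk n) _
    have hres : (volume : Measure ℝ).restrict (Set.Ioi (1:ℝ))
        = volume.restrict (Set.Ici 1) := restrict_Ioi_eq_restrict_Ici
    calc ∫⁻ t in Set.Ioi (1:ℝ), ENNReal.ofReal (1 / F t)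
        = ∫⁻ t in Set.Ici (1:ℝ), ENNReal.ofReal (1 / F t) := by rw [hres]
      _ = ∑' n : ℕ, ∫⁻ t in Set.Ico (a n) (a (n + 1)), ENNReal.ofReal (1 / F t) := by
          rw [hUnion, lintegral_iUnion (fun n => measurableSet_Ico) hdisjI]
      _ = ⊤ := by
          rw [eq_top_iff]
          calc (⊤ : ℝ≥0∞) = ∑' _ : ℕ, (1 : ℝ≥0∞) :=
                (ENNReal.tsum_const_eq_top_of_ne_zero one_ne_zero).symm
            _ ≤ _ := ENNReal.tsum_le_tsum hterm
end
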